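/- Every idempotent semigroup with at least 4 elements has a subsemigroup of order exactly 4. -/

import Mathlib

/-- value of the nonempty word `x :: l` in a semigroup -/
private def vv {S : Type*} [Semigroup S] : S → List S → S
  | x, [] => x
  | x, y :: l => x * vv y l

private lemma vv_cons {S : Type*} [Semigroup S] (x y : S) (l : List S) :
    vv x (y :: l) = x * vv y l := rfl

private lemma vv_append {S : Type*} [Semigroup S] (x y : S) (l₁ l₂ : List S) :
    vv x (l₁ ++ y :: l₂) = vv x l₁ * vv y l₂ := by
  induction l₁ generalizing x with
  | nil => rfl
  | cons z l ih =>
      show vv x (z :: (l ++ y :: l₂)) = _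
      rw [vv_cons, ih, vv_cons, mul_assoc]

/-- reduction: every word's value equals the value of a duplicate-free subword -/
private lemma red {S : Type*} [Semigroup S] (hid : ∀ s : S, s * s = s)
    (W1 : ∀ u v : S, u * v * u = u * v ∨ u * v * u = v * u) :
    ∀ (n : ℕ) (x : S) (l : List S), l.length ≤ n →
      ∃ x' l', vv x' l' = vv x l ∧ (x' :: l').Nodup ∧ (x' :: l') ⊆ (x :: l) := by
  intro n
  induction n with
  | zero =>
      intro x l hl
      have : l = [] := List.eq_nil_of_length_eq_zero (Nat.le_zero.mp hl)
      subst this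
      exact ⟨x, [], rfl, List.nodup_singleton x, fun z hz => hz⟩
  | succ n IH =>
      intro x l hl
      by_cases hx : x ∈ l
      · obtain ⟨s, t, rfl⟩ := List.append_of_mem hx
        match s, t with
        | [], [] =>
            refine ⟨x, [], (hid x).symm, List.nodup_singleton x, ?_⟩
            intro z hz; simp at hz; simp [hz]
        | [], t0 :: t1 =>
            have hlen : (t0 :: t1).length ≤ n := by
              simp at hl ⊢; omega
            obtain ⟨x', l', hv, hnd, hsub⟩ := IH x (t0 :: t1) hlen
            refine ⟨x', l', ?_, hnd, ?_⟩
            · rw [hv]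
              show vv x (t0 :: t1) = x * vv x (t0 :: t1)
              rw [vv_cons, ← mul_assoc, hid]
            · intro z hz
              have := hsub hz
              simp at this ⊢; tauto
        | s0 :: s1, [] =>
            have hval : vv x (s0 :: s1 ++ x :: []) = (x * vv s0 s1) * x := by
              rw [vv_append]; rfl
            rcases W1 x (vv s0 s1) with h | h
            · have hlen : (s0 :: s1).length ≤ n := by simp at hl ⊢; omega
              obtain ⟨x', l', hv, hnd, hsub⟩ := IH x (s0 :: s1) hlen
              refine ⟨x', l', ?_, hnd, ?_⟩
              · rw [hv, hval, h]; rfl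
              · intro z hz
                have := hsub hz
                simp at this ⊢; tauto
            · have hlen : (s1 ++ [x]).length ≤ n := by simp at hl ⊢; omega
              obtain ⟨x', l', hv, hnd, hsub⟩ := IH s0 (s1 ++ [x]) hlen
              refine ⟨x', l', ?_, hnd, ?_⟩
              · rw [hv, hval, h, vv_append]; rfl
              · intro z hz
                have := hsub hz
                simp at this ⊢; tauto
        | s0 :: s1, t0 :: t1 =>
            have hval : vv x (s0 :: s1 ++ x :: t0 :: t1)
                = ((x * vv s0 s1) * x) * vv t0 t1 := by
              rw [vv_append]
              show (x * vv s0 s1) * (x * vv t0 t1) = _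
              simp only [mul_assoc]
            rcases W1 x (vv s0 s1) with h | h
            · have hlen : (s0 :: s1 ++ t0 :: t1).length ≤ n := by
                simp at hl ⊢; omega
              obtain ⟨x', l', hv, hnd, hsub⟩ := IH x (s0 :: s1 ++ t0 :: t1) hlen
              refine ⟨x', l', ?_, hnd, ?_⟩
              · rw [hv, hval, h, vv_append]
                rfl
              · intro z hz
                have := hsub hz
                simp at this ⊢; tauto
            · have hlen : (s1 ++ x :: t0 :: t1).length ≤ n := by
                simp at hl ⊢; omega
              obtain ⟨x', l', hv, hnd, hsub⟩ := IH s0 (s1 ++ x :: t0 :: t1) hlen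
              refine ⟨x', l', ?_, hnd, ?_⟩
              · rw [hv, hval, h, vv_append, vv_cons, ← mul_assoc]
              · intro z hz
                have := hsub hz
                simp at this ⊢; tauto
      · match l with
        | [] => exact ⟨x, [], rfl, List.nodup_singleton x, fun z hz => hz⟩
        | y :: m =>
            have hlen : m.length ≤ n := by simp at hl; omega
            obtain ⟨y', m', hv, hnd, hsub⟩ := IH y m hlen
            refine ⟨x, y' :: m', ?_, ?_, ?_⟩
            · rw [vv_cons, hv, vv_cons]
            · refine List.nodup_cons.mpr ⟨fun hc => hx (hsub hc), hnd⟩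
            · intro z hz
              rcases List.mem_cons.mp hz with h | h
              · simp [h]
              · have := hsub h
                simp at this ⊢; tauto

/-- shrink a finite closed set of card n+4 to a closed set of card 4 -/
private lemma shrink {S : Type*} [Semigroup S] (hid : ∀ s : S, s * s = s)
    (W2 : ∀ x y : S, x * y * x = x * y ∨ y * x * y = x * y) :
    ∀ (n : ℕ) (T : Finset S), T.card = n + 4 →
      (∀ x ∈ T, ∀ y ∈ T, x * y ∈ T) →
      ∃ T' : Finset S, T'.card = 4 ∧ ∀ x ∈ T', ∀ y ∈ T', x * y ∈ T' := by
  classical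
  intro n
  induction n with
  | zero => exact fun T hc hcl => ⟨T, hc, hcl⟩
  | succ n IH =>
      intro T hc hcl
      letI pre : Preorder S :=
        { le := fun u v => u * v = u ∧ v * u = u
          le_refl := fun u => ⟨hid u, hid u⟩
          le_trans := by
            rintro a b c ⟨h1, h2⟩ ⟨h3, h4⟩
            constructor
            · calc a * c = (a * b) * c := by rw [h1]
                _ = a * (b * c) := by rw [mul_assoc]
                _ = a * b := by rw [h3]
                _ = a := h1
            · calc c * a = c * (b * a) := by rw [h2]
                _ = (c * b) * a := by rw [mul_assoc]
                _ = b * a := by rw [h4]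
                _ = a := h2 }
      have hne : T.Nonempty := Finset.card_pos.mp (by omega)
      obtain ⟨m, hm, hmax⟩ := T.exists_maximal hne
      have hcl' : ∀ x ∈ T.erase m, ∀ y ∈ T.erase m, x * y ∈ T.erase m := by
        intro x hx y hy
        have hx' := Finset.mem_of_mem_erase hx
        have hy' := Finset.mem_of_mem_erase hy
        have hxyT := hcl x hx' y hy'
        rw [Finset.mem_erase]
        refine ⟨fun heq => ?_, hxyT⟩
        have hle : m ≤ x ∨ m ≤ y := by
          rcases W2 x y with h | h
          · left
            constructor
            · rw [← heq]; exact h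
            · rw [← heq, ← mul_assoc, hid]
          · right
            constructor
            · rw [← heq, mul_assoc, hid]
            · rw [← heq, ← mul_assoc]; exact h
        rcases hle with hle | hle
        · refine absurd (hmax hx' hle) (fun h' => ?_)
          exact Finset.ne_of_mem_erase hx (h'.1.symm.trans hle.2)
        · refine absurd (hmax hy' hle) (fun h' => ?_)
          exact Finset.ne_of_mem_erase hy (h'.1.symm.trans hle.2)
      refine IH (T.erase m) ?_ hcl'
      rw [Finset.card_erase_of_mem hm, hc]
      omega

/-- Every idempotent semigroup with at least 4 elements has a subsemigroup
of order exactly 4. -/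
theorem stmt_2 (S : Type*) [Semigroup S] (hidem : ∀ x : S, x * x = x)
    (hcard : ∃ f : Fin 4 → S, Function.Injective f) :
    ∃ T : Finset S, T.card = 4 ∧ ∀ x ∈ T, ∀ y ∈ T, x * y ∈ T := by
  classical
  obtain ⟨f, hf⟩ := hcard
  -- basic band rewriting lemmas
  have k1 : ∀ u w : S, u * (u * w) = u * w := by
    intro u w; rw [← mul_assoc, hidem]
  have k2 : ∀ u w : S, u * (w * (u * w)) = u * w := by
    intro u w; rw [← mul_assoc]; exact hidem _
  have k3 : ∀ u w z : S, u * (w * (u * (w * z))) = u * (w * z) := by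
    intro u w z
    have h := congrArg (· * z) (k2 u w)
    simpa [mul_assoc] using h
  by_cases hex : ∃ x y : S, x * y ≠ y * x ∧ x * y ≠ x * y * x ∧ x * y ≠ y * x * y
      ∧ y * x ≠ x * y * x ∧ y * x ≠ y * x * y ∧ x * y * x ≠ y * x * y
  · obtain ⟨x, y, h1, h2, h3, h4, h5, h6⟩ := hex
    refine ⟨{x * y, y * x, x * y * x, y * x * y}, ?_, ?_⟩
    · rw [Finset.card_insert_of_notMem (by simp [h1, h2, h3]),
        Finset.card_insert_of_notMem (by simp [h4, h5]),
        Finset.card_insert_of_notMem (by simp [h6]),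
        Finset.card_singleton]
    · intro u hu v hv
      simp only [Finset.mem_insert, Finset.mem_singleton] at hu hv ⊢
      rcases hu with rfl | rfl | rfl | rfl <;> rcases hv with rfl | rfl | rfl | rfl <;>
        simp [mul_assoc, hidem, k1, k2, k3]
  · push_neg at hex
    -- pattern lemma
    have hcoin : ∀ x y : S,
        (x * y * x = x * y ∧ y * x * y = y * x) ∨
        (x * y * x = y * x ∧ y * x * y = x * y) := by
      intro x y
      by_cases h1 : x * y = y * x
      · left
        constructor
        · rw [h1, mul_assoc, hidem]
        · rw [← h1, mul_assoc, hidem]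
      by_cases h2 : x * y = x * y * x
      · left
        refine ⟨h2.symm, ?_⟩
        calc y * x * y = y * (x * y) := by rw [mul_assoc]
          _ = y * (x * y * x) := by rw [← h2]
          _ = (y * x) * (y * x) := by simp only [mul_assoc]
          _ = y * x := hidem _
      by_cases h3 : x * y = y * x * y
      · right
        refine ⟨?_, h3.symm⟩
        calc x * y * x = (y * x * y) * x := by rw [← h3]
          _ = (y * x) * (y * x) := by simp only [mul_assoc]
          _ = y * x := hidem _
      by_cases h4 : y * x = x * y * x
      · right
        refine ⟨h4.symm, ?_⟩
        calc y * x * y = (x * y * x) * y := by rw [← h4]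
          _ = (x * y) * (x * y) := by simp only [mul_assoc]
          _ = x * y := hidem _
      by_cases h5 : y * x = y * x * y
      · left
        refine ⟨?_, h5.symm⟩
        calc x * y * x = x * (y * x) := by rw [mul_assoc]
          _ = x * (y * x * y) := by rw [← h5]
          _ = (x * y) * (x * y) := by simp only [mul_assoc]
          _ = x * y := hidem _
      · have h6 := hex x y h1 h2 h3 h4 h5
        have hp : x * y = y * x * y := by
          calc x * y = (x * y) * (x * y) := (hidem _).symm
            _ = (x * y * x) * y := by simp only [mul_assoc]
            _ = (y * x * y) * y := by rw [h6]
            _ = y * x * (y * y) := by simp only [mul_assoc]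
            _ = y * x * y := by rw [hidem]
        right
        refine ⟨?_, hp.symm⟩
        calc x * y * x = (y * x * y) * x := by rw [← hp]
          _ = (y * x) * (y * x) := by simp only [mul_assoc]
          _ = y * x := hidem _
    have W1 : ∀ u v : S, u * v * u = u * v ∨ u * v * u = v * u := by
      intro u v
      rcases hcoin u v with ⟨h, _⟩ | ⟨h, _⟩
      · exact Or.inl h
      · exact Or.inr h
    have W2 : ∀ x y : S, x * y * x = x * y ∨ y * x * y = x * y := by
      intro x y
      rcases hcoin x y with ⟨h, _⟩ | ⟨_, h⟩
      · exact Or.inl h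
      · exact Or.inr h
    set a := f 0 with ha
    set b := f 1 with hb
    set c := f 2 with hc
    set d := f 3 with hd
    have hab : a ≠ b := fun h => absurd (hf h) (by decide)
    have hac : a ≠ c := fun h => absurd (hf h) (by decide)
    have had : a ≠ d := fun h => absurd (hf h) (by decide)
    have hbc : b ≠ c := fun h => absurd (hf h) (by decide)
    have hbd : b ≠ d := fun h => absurd (hf h) (by decide)
    have hcd : c ≠ d := fun h => absurd (hf h) (by decide)
    set L0 : List S := [a, b, c, d] with hL0
    set T : Finset S :=
      ((L0.sublists.flatMap List.permutations).map
        (fun w => match w with | [] => a | x :: l => vv x l)).toFinset with hT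
    have hmemT : ∀ (x : S) (l : List S), (x :: l).Nodup → (x :: l) ⊆ L0 →
        vv x l ∈ T := by
      intro x l hnd hsub
      obtain ⟨w, hw1, hw2⟩ := hnd.subperm hsub
      rw [hT, List.mem_toFinset, List.mem_map]
      refine ⟨x :: l, ?_, rfl⟩
      rw [List.mem_flatMap]
      exact ⟨w, List.mem_sublists.mpr hw2, List.mem_permutations.mpr hw1.symm⟩
    have helim : ∀ z ∈ T, ∃ x l, vv x l = z ∧ (x :: l) ⊆ L0 := by
      intro z hz
      rw [hT, List.mem_toFinset, List.mem_map] at hz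
      obtain ⟨w, hwL, hval⟩ := hz
      rw [List.mem_flatMap] at hwL
      obtain ⟨sl, hsl, hperm⟩ := hwL
      have hwsub : w ⊆ L0 :=
        fun z hz => (List.mem_sublists.mp hsl).subset
          ((List.mem_permutations.mp hperm).subset hz)
      match w, hval with
      | [], hval => exact ⟨a, [], hval, by intro z hz; simp at hz; simp [hz, hL0]⟩
      | x :: l, hval => exact ⟨x, l, hval, hwsub⟩
    have hclosed : ∀ u ∈ T, ∀ v ∈ T, u * v ∈ T := by
      intro u hu v hv
      obtain ⟨x, l, rfl, hsub1⟩ := helim u hu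
      obtain ⟨y, m, rfl, hsub2⟩ := helim v hv
      have hval : vv x l * vv y m = vv x (l ++ y :: m) := (vv_append x y l m).symm
      obtain ⟨x', l', hv', hnd', hsub'⟩ :=
        red hidem W1 (l ++ y :: m).length x (l ++ y :: m) le_rfl
      rw [hval, ← hv']
      refine hmemT x' l' hnd' (List.Subset.trans hsub' ?_)
      intro z hz
      rcases List.mem_cons.mp hz with h | h
      · exact hsub1 (h ▸ List.mem_cons_self (a := x) (l := l))
      · rcases List.mem_append.mp h with h' | h'
        · exact hsub1 (List.mem_cons_of_mem x h')
        · exact hsub2 h'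
    have haT : a ∈ T := hmemT a [] (List.nodup_singleton a) (by simp [hL0])
    have hbT : b ∈ T := hmemT b [] (List.nodup_singleton b) (by simp [hL0])
    have hcT : c ∈ T := hmemT c [] (List.nodup_singleton c) (by simp [hL0])
    have hdT : d ∈ T := hmemT d [] (List.nodup_singleton d) (by simp [hL0])
    have hsubT : ({a, b, c, d} : Finset S) ⊆ T := by
      intro z hz
      simp only [Finset.mem_insert, Finset.mem_singleton] at hz
      rcases hz with rfl | rfl | rfl | rfl <;> assumption
    have hcard4 : ({a, b, c, d} : Finset S).card = 4 := by
      rw [Finset.card_insert_of_notMem (by simp [hab, hac, had]),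
        Finset.card_insert_of_notMem (by simp [hbc, hbd]),
        Finset.card_insert_of_notMem (by simp [hcd]),
        Finset.card_singleton]
    have hTcard : 4 ≤ T.card := hcard4 ▸ Finset.card_le_card hsubT
    exact shrink hidem W2 (T.card - 4) T (by omega) hclosed
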